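/- Let M be a matroid on a finite ground set E, and let F ⊊ G be flats of M with k := rk(G) − rk(F) ≥ 2. Then the vector Σ_{l=2}^{k} (−1)^{k−l+1} · Σ_{F = F^(0) ⋖ F^(1) ⋖ ⋯ ⋖ F^(l), F^(l) ⊆ G} e_{F^(l−1)} lies in the ℝ-linear span of {e_F, e_G} in ℝ^E, where the inner sums range over all chains F = F^(0) ⋖ ⋯ ⋖ F^(l) of flats of M with F^(l) ⊆ G. (This is the rearranged degenerate case k = rk(G) − rk(F) of the higher balancing relations: after substituting consecutive flag members F = F_i and G = F_{i+1}, the displayed alternating combination of the vectors e_{F^(l−1)} lies in the linear subspace spanned by the cone of the flag.) -/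

import Mathlib

open scoped BigOperators

/-- The `0-1` indicator vector `e_F ∈ ℝ^E` of a subset `F ⊆ E`. -/
noncomputable def eVec {α : Type*} (F : Set α) : α → ℝ := F.indicator 1

/-- The rank of a set `X` in a matroid `M`: the largest cardinality of an
independent subset of `X`. -/
noncomputable def mrk {α : Type*} (M : Matroid α) (X : Set α) : ℕ :=
  sSup {n : ℕ | ∃ I, M.Indep I ∧ I ⊆ X ∧ I.ncard = n}

/-- `F'` covers `F` in the lattice of flats of `M`: both are flats, `F ⊊ F'`,
and there is no flat strictly between them. -/
def MCov {α : Type*} (M : Matroid α) (F F' : Set α) : Prop :=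
  M.IsFlat F ∧ M.IsFlat F' ∧ F ⊂ F' ∧ ¬ ∃ F'', M.IsFlat F'' ∧ F ⊂ F'' ∧ F'' ⊂ F'

/-- A chain `F = F⁽⁰⁾ ⋖ F⁽¹⁾ ⋖ ⋯ ⋖ F⁽ˡ⁾` of flats of `M` with `F⁽ˡ⁾ ⊆ G`. -/
def IsCovChain {α : Type*} (M : Matroid α) (F G : Set α) (l : ℕ)
    (c : Fin (l + 1) → Set α) : Prop :=
  c 0 = F ∧ (∀ j : Fin l, MCov M (c j.castSucc) (c j.succ)) ∧ c (Fin.last l) ⊆ G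

/-! ### Auxiliary lemmas -/

open Set

section Aux

variable {α : Type*} {M : Matroid α} {X Y H H' F G A : Set α} {x i : α} {I J : Set α}

lemma myFlat_closure (M : Matroid α) (X : Set α) : M.IsFlat (M.closure X) := by
  rw [Matroid.closure_def]
  have hne : Nonempty ({F | M.IsFlat F ∧ X ∩ M.E ⊆ F} : Set (Set α)) :=
    ⟨⟨M.E, M.ground_isFlat, Set.inter_subset_right⟩⟩
  rw [Set.sInter_eq_iInter]
  exact Matroid.IsFlat.iInter (fun F => F.2.1)

section RankLemmas
variable [Fintype α]

lemma mrk_eq_of_basis (hI : M.IsBasis I X) : mrk M X = I.ncard := by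
  apply le_antisymm
  · refine csSup_le ⟨0, ∅, M.empty_indep, empty_subset X, by simp⟩ ?_
    rintro n ⟨J, hJ, hJX, rfl⟩
    obtain ⟨I', hI', hJI'⟩ := hJ.subset_isBasis_of_subset hJX hI.subset_ground
    have hcard : I'.ncard = I.ncard := by
      have h := hI'.encard_eq_encard hI
      rw [Set.ncard_def, Set.ncard_def, h]
    exact le_trans (Set.ncard_le_ncard hJI' (Set.toFinite _)) hcard.le
  · apply le_csSup
    · refine ⟨Nat.card α, ?_⟩
      rintro n ⟨J, _, _, rfl⟩
      simpa [Set.ncard_univ] using Set.ncard_le_ncard (subset_univ J) (Set.toFinite _)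
    · exact ⟨I, hI.indep, hI.subset, rfl⟩

lemma le_mrk_of_indep (hJ : M.Indep J) (hJX : J ⊆ X) (hX : X ⊆ M.E) : J.ncard ≤ mrk M X := by
  obtain ⟨I, hI⟩ := M.exists_isBasis X hX
  obtain ⟨I', hI', hJI'⟩ := hJ.subset_isBasis_of_subset hJX hX
  rw [mrk_eq_of_basis hI]
  have hcard : I'.ncard = I.ncard := by
    have h := hI'.encard_eq_encard hI
    rw [Set.ncard_def, Set.ncard_def, h]
  exact le_trans (Set.ncard_le_ncard hJI' (Set.toFinite _)) hcard.le

lemma mrk_mono (hXY : X ⊆ Y) (hY : Y ⊆ M.E) : mrk M X ≤ mrk M Y := by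
  obtain ⟨I, hI⟩ := M.exists_isBasis X (hXY.trans hY)
  rw [mrk_eq_of_basis hI]
  exact le_mrk_of_indep hI.indep (hI.subset.trans hXY) hY

lemma mrk_le_ncard (hX : X ⊆ M.E) : mrk M X ≤ X.ncard := by
  obtain ⟨I, hI⟩ := M.exists_isBasis X hX
  rw [mrk_eq_of_basis hI]
  exact Set.ncard_le_ncard hI.subset (Set.toFinite _)

lemma mrk_closure_eq (hX : X ⊆ M.E) : mrk M (M.closure X) = mrk M X := by
  obtain ⟨I, hI⟩ := M.exists_isBasis X hX
  rw [mrk_eq_of_basis hI, mrk_eq_of_basis hI.isBasis_closure_right]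

lemma mrk_insert_le (hx : x ∈ M.E) (hX : X ⊆ M.E) : mrk M (insert x X) ≤ mrk M X + 1 := by
  obtain ⟨I, hI⟩ := M.exists_isBasis X hX
  have hsub : insert x X ⊆ M.closure (insert x I) := by
    apply insert_subset
    · exact M.mem_closure_of_mem (mem_insert x I) (insert_subset hx hI.indep.subset_ground)
    · exact hI.subset_closure.trans (M.closure_subset_closure (subset_insert x I))
  calc mrk M (insert x X) ≤ mrk M (M.closure (insert x I)) :=
        mrk_mono hsub (M.closure_subset_ground _)
    _ = mrk M (insert x I) := mrk_closure_eq (insert_subset hx hI.indep.subset_ground)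
    _ ≤ (insert x I).ncard := mrk_le_ncard (insert_subset hx hI.indep.subset_ground)
    _ ≤ I.ncard + 1 := Set.ncard_insert_le x I
    _ = mrk M X + 1 := by rw [mrk_eq_of_basis hI]

lemma mrk_lt_of_flat_ssubset (hH : M.IsFlat H) (hss : H ⊂ H') (hH' : H' ⊆ M.E) :
    mrk M H < mrk M H' := by
  obtain ⟨I, hI⟩ := M.exists_isBasis H hH.subset_ground
  obtain ⟨x, hxH', hxH⟩ := exists_of_ssubset hss
  have hclI : M.closure I = H := by rw [hI.closure_eq_closure, hH.closure]
  have hxcl : x ∉ M.closure I := fun hmem => hxH (hclI ▸ hmem)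
  have hxI : x ∉ I := fun h => hxH (hI.subset h)
  have hind : M.Indep (insert x I) := by
    rw [hI.indep.insert_indep_iff_of_notMem hxI]
    exact ⟨hH' hxH', hxcl⟩
  have := le_mrk_of_indep hind (insert_subset hxH' (hI.subset.trans hss.subset)) hH'
  rw [Set.ncard_insert_of_notMem hxI (Set.toFinite _)] at this
  rw [mrk_eq_of_basis hI]
  omega

end RankLemmas

/-- Atom cover: adjoining one new element to a flat gives a cover. -/
lemma mcov_closure_insert (hH : M.IsFlat H) (hx : x ∈ M.E) (hxH : x ∉ H) :
    MCov M H (M.closure (insert x H)) := by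
  have hHE : insert x H ⊆ M.E := insert_subset hx hH.subset_ground
  have hsub : H ⊆ M.closure (insert x H) :=
    (subset_insert x H).trans (M.subset_closure _ hHE)
  have hxcl : x ∈ M.closure (insert x H) := M.mem_closure_of_mem (mem_insert x H) hHE
  refine ⟨hH, myFlat_closure M _, ⟨hsub, fun habs => hxH (habs hxcl)⟩, ?_⟩
  rintro ⟨K, hK, hHK, hKcl⟩
  obtain ⟨y, hyK, hyH⟩ := exists_of_ssubset hHK
  have hy : y ∈ M.closure (insert x H) \ M.closure H := by
    refine ⟨hKcl.subset hyK, ?_⟩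
    rw [hH.closure]; exact hyH
  have hxy := Matroid.closure_exchange hy
  have hxK : x ∈ K := by
    have h1 : M.closure (insert y H) ⊆ M.closure K :=
      M.closure_subset_closure (insert_subset hyK hHK.subset)
    rw [hK.closure] at h1
    exact h1 hxy.1
  have : M.closure (insert x H) ⊆ K := by
    have h2 : M.closure (insert x H) ⊆ M.closure K :=
      M.closure_subset_closure (insert_subset hxK hHK.subset)
    rwa [hK.closure] at h2
  exact (hKcl.not_subset) this

lemma MCov.eq_closure_insert (h : MCov M H H') (hx : x ∈ H' \ H) :
    H' = M.closure (insert x H) := by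
  obtain ⟨hH, hH', hss, hno⟩ := h
  have hflat : M.IsFlat (M.closure (insert x H)) := myFlat_closure M _
  have h1 : H ⊂ M.closure (insert x H) := by
    have hHE : insert x H ⊆ M.E := insert_subset (hH'.subset_ground hx.1) hH.subset_ground
    refine ⟨(subset_insert x H).trans (M.subset_closure _ hHE), fun habs => hx.2 ?_⟩
    exact habs (M.mem_closure_of_mem (mem_insert x H) hHE)
  have h2 : M.closure (insert x H) ⊆ H' := by
    have := M.closure_subset_closure (insert_subset hx.1 hss.subset)
    rwa [hH'.closure] at this
  by_contra hne
  exact hno ⟨M.closure (insert x H), hflat, h1, ⟨h2, fun habs => hne (h2.antisymm habs).symm⟩⟩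

section Chains

variable {l m : ℕ} {c : Fin (l + 1) → Set α}

lemma chain_step (hc : IsCovChain M F G l c) (j : Fin l) : c j.castSucc ⊆ c j.succ :=
  (hc.2.1 j).2.2.1.subset

lemma chain_mono_nat (hc : IsCovChain M F G l c) :
    ∀ (b : ℕ) (hb : b < l + 1) (a : ℕ) (hab : a ≤ b),
      c ⟨a, lt_of_le_of_lt hab hb⟩ ⊆ c ⟨b, hb⟩ := by
  intro b
  induction b with
  | zero => intro hb a hab; interval_cases a; rfl
  | succ n ih =>
    intro hb a hab
    rcases Nat.lt_or_ge a (n+1) with h | h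
    · have hstep : c ⟨n, by omega⟩ ⊆ c ⟨n+1, hb⟩ := by
        have := chain_step hc ⟨n, by omega⟩
        simpa [Fin.castSucc, Fin.succ] using this
      exact (ih (by omega) a (by omega)).trans hstep
    · have : a = n + 1 := by omega
      subst this; rfl

lemma chain_mono (hc : IsCovChain M F G l c) {a b : Fin (l+1)} (hab : a ≤ b) : c a ⊆ c b := by
  have := chain_mono_nat hc b.1 b.2 a.1 hab
  simpa using this

lemma chain_flat (hc : IsCovChain M F G l c) (hF : M.IsFlat F) (j : Fin (l+1)) : M.IsFlat (c j) := by
  rcases Fin.eq_zero_or_eq_succ j with rfl | ⟨j₀, rfl⟩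
  · rw [hc.1]; exact hF
  · exact (hc.2.1 j₀).2.1

lemma chain_subset_G (hc : IsCovChain M F G l c) (j : Fin (l+1)) : c j ⊆ G :=
  (chain_mono hc (Fin.le_last j)).trans hc.2.2

lemma chain_F_subset (hc : IsCovChain M F G l c) (j : Fin (l+1)) : F ⊆ c j := by
  have := chain_mono hc (Fin.zero_le j)
  rwa [hc.1] at this

variable [Fintype α]

lemma MCov.mrk_eq (h : MCov M H H') : mrk M H' = mrk M H + 1 := by
  obtain ⟨x, hx1, hx2⟩ := exists_of_ssubset h.2.2.1
  have hE' : H' = M.closure (insert x H) := h.eq_closure_insert ⟨hx1, hx2⟩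
  have hle : mrk M H' ≤ mrk M H + 1 := by
    rw [hE', mrk_closure_eq (insert_subset (h.2.1.subset_ground hx1) h.1.subset_ground)]
    exact mrk_insert_le (h.2.1.subset_ground hx1) h.1.subset_ground
  have hlt : mrk M H < mrk M H' := mrk_lt_of_flat_ssubset h.1 h.2.2.1 h.2.1.subset_ground
  omega

lemma chain_mrk (hc : IsCovChain M F G l c) :
    ∀ (j : ℕ) (hj : j < l + 1), mrk M (c ⟨j, hj⟩) = mrk M F + j := by
  intro j
  induction j with
  | zero => intro hj; rw [show (⟨0, hj⟩ : Fin (l+1)) = 0 from rfl, hc.1]; omega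
  | succ n ih =>
    intro hj
    have hcov := hc.2.1 ⟨n, by omega⟩
    have h1 : mrk M (c ⟨n+1, hj⟩) = mrk M (c ⟨n, by omega⟩) + 1 := by
      have := hcov.mrk_eq
      simpa [Fin.castSucc, Fin.succ] using this
    rw [h1, ih (by omega)]
    omega

/-- A chain of full length must end at `G`. -/
lemma chain_top_eq (hc : IsCovChain M F G l c) (hF : M.IsFlat F)
    (hGE : G ⊆ M.E) (hlen : mrk M F + l = mrk M G) : c (Fin.last l) = G := by
  by_contra hne
  have hss : c (Fin.last l) ⊂ G := ⟨hc.2.2, fun habs => hne (hc.2.2.antisymm habs)⟩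
  have hlt := mrk_lt_of_flat_ssubset (chain_flat hc hF (Fin.last l)) hss hGE
  have := chain_mrk hc l (by omega)
  have heq : (⟨l, by omega⟩ : Fin (l+1)) = Fin.last l := rfl
  rw [heq] at this
  omega

end Chains

section InitSnoc

variable {m : ℕ}

lemma init_chain {c : Fin (m + 2) → Set α} (hc : IsCovChain M F G (m+1) c) :
    IsCovChain M F G m (Fin.init c) := by
  refine ⟨?_, ?_, ?_⟩
  · rw [Fin.init]; simpa using hc.1
  · intro j
    have h := hc.2.1 j.castSucc
    show MCov M (c j.castSucc.castSucc) (c j.succ.castSucc)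
    rwa [Fin.succ_castSucc] at h
  · rw [Fin.init]
    exact (chain_mono hc (by simp [Fin.le_def])).trans hc.2.2

lemma snoc_chain {c' : Fin (m + 1) → Set α} (hc' : IsCovChain M F G m c')
    (hcov : MCov M (c' (Fin.last m)) A) (hA : A ⊆ G) :
    IsCovChain M F G (m+1) (Fin.snoc c' A) := by
  refine ⟨?_, ?_, ?_⟩
  · rw [show (0 : Fin (m+2)) = (0 : Fin (m+1)).castSucc by simp]
    rw [Fin.snoc_castSucc]
    simpa using hc'.1
  · intro j
    refine Fin.lastCases ?_ ?_ j
    · rw [Fin.succ_last, Fin.snoc_last, Fin.snoc_castSucc]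
      exact hcov
    · intro j₀
      rw [Fin.succ_castSucc, Fin.snoc_castSucc, Fin.snoc_castSucc]
      exact hc'.2.1 j₀
  · rw [Fin.snoc_last]; exact hA

end InitSnoc

section Counting

variable [Fintype α] {m : ℕ}

lemma R_eq (hF : M.IsFlat F) (hG : M.IsFlat G) (hi : i ∈ G) (hE : M.E = Set.univ) (m : ℕ) :
    {c : Fin (m+2) → Set α | IsCovChain M F G (m+1) c ∧ i ∈ c (Fin.last (m+1)) ∧
        i ∉ c ((Fin.last m).castSucc)}.ncard
    = {c' : Fin (m+1) → Set α | IsCovChain M F G m c' ∧ i ∉ c' (Fin.last m)}.ncard := by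
  set R := {c : Fin (m+2) → Set α | IsCovChain M F G (m+1) c ∧ i ∈ c (Fin.last (m+1)) ∧
        i ∉ c ((Fin.last m).castSucc)} with hR
  have himg : {c' : Fin (m+1) → Set α | IsCovChain M F G m c' ∧ i ∉ c' (Fin.last m)}
      = Fin.init '' R := by
    ext c'
    constructor
    · rintro ⟨hc', hic'⟩
      set A := M.closure (insert i (c' (Fin.last m))) with hA
      have hcov : MCov M (c' (Fin.last m)) A :=
        mcov_closure_insert (chain_flat hc' hF (Fin.last m)) (by rw [hE]; trivial) hic'
      have hAG : A ⊆ G := by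
        have h1 : insert i (c' (Fin.last m)) ⊆ G := insert_subset hi (chain_subset_G hc' _)
        have h2 := M.closure_subset_closure h1
        rwa [hG.closure] at h2
      refine ⟨Fin.snoc c' A, ⟨snoc_chain hc' hcov hAG, ?_, ?_⟩, Fin.init_snoc _ _⟩
      · rw [Fin.snoc_last]
        exact M.mem_closure_of_mem (mem_insert i _) (by rw [hE]; exact subset_univ _)
      · rw [Fin.snoc_castSucc]; exact hic'
    · rintro ⟨c, ⟨hc, hil, hip⟩, rfl⟩
      exact ⟨init_chain hc, hip⟩
  have hinj : Set.InjOn Fin.init R := by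
    rintro c₁ ⟨hc₁, hil₁, hip₁⟩ c₂ ⟨hc₂, hil₂, hip₂⟩ heq
    have hcov₁ := hc₁.2.1 (Fin.last m)
    have hcov₂ := hc₂.2.1 (Fin.last m)
    rw [Fin.succ_last] at hcov₁ hcov₂
    have e₁ : c₁ (Fin.last (m+1)) = M.closure (insert i (c₁ ((Fin.last m).castSucc))) :=
      hcov₁.eq_closure_insert ⟨hil₁, hip₁⟩
    have e₂ : c₂ (Fin.last (m+1)) = M.closure (insert i (c₂ ((Fin.last m).castSucc))) :=
      hcov₂.eq_closure_insert ⟨hil₂, hip₂⟩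
    have hpen : ∀ j : Fin (m+1), c₁ j.castSucc = c₂ j.castSucc := fun j => congrFun heq j
    funext j
    refine Fin.lastCases ?_ ?_ j
    · rw [e₁, e₂, hpen (Fin.last m)]
    · intro j₀; exact hpen j₀
  rw [himg, Set.ncard_image_of_injOn hinj]

/-- The central counting identity, in natural numbers. -/
lemma N_count (hF : M.IsFlat F) (hG : M.IsFlat G) (hi : i ∈ G) (hE : M.E = Set.univ) (m : ℕ) :
    {c : Fin (m+2) → Set α | IsCovChain M F G (m+1) c ∧ i ∈ c ((Fin.last m).castSucc)}.ncard
      + {c : Fin (m+1) → Set α | IsCovChain M F G m c}.ncard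
    = {c : Fin (m+2) → Set α | IsCovChain M F G (m+1) c ∧ i ∈ c (Fin.last (m+1))}.ncard
      + {c : Fin (m+1) → Set α | IsCovChain M F G m c ∧ i ∈ c (Fin.last m)}.ncard := by
  classical
  -- split P(m+1) into N(m+1) and R(m+1)
  have hsplit1 : {c : Fin (m+2) → Set α | IsCovChain M F G (m+1) c ∧ i ∈ c (Fin.last (m+1))}
      = {c : Fin (m+2) → Set α | IsCovChain M F G (m+1) c ∧ i ∈ c ((Fin.last m).castSucc)}
        ∪ {c : Fin (m+2) → Set α | IsCovChain M F G (m+1) c ∧ i ∈ c (Fin.last (m+1)) ∧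
            i ∉ c ((Fin.last m).castSucc)} := by
    ext c
    simp only [mem_setOf_eq, mem_union]
    constructor
    · rintro ⟨hc, hil⟩
      by_cases hp : i ∈ c ((Fin.last m).castSucc)
      · exact Or.inl ⟨hc, hp⟩
      · exact Or.inr ⟨hc, hil, hp⟩
    · rintro (⟨hc, hp⟩ | ⟨hc, hil, _⟩)
      · exact ⟨hc, chain_mono hc (by simp [Fin.le_def]) hp⟩
      · exact ⟨hc, hil⟩
  have hdisj1 : Disjoint
      {c : Fin (m+2) → Set α | IsCovChain M F G (m+1) c ∧ i ∈ c ((Fin.last m).castSucc)}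
      {c : Fin (m+2) → Set α | IsCovChain M F G (m+1) c ∧ i ∈ c (Fin.last (m+1)) ∧
          i ∉ c ((Fin.last m).castSucc)} := by
    rw [Set.disjoint_left]
    rintro c ⟨_, hp⟩ ⟨_, _, hnp⟩
    exact hnp hp
  -- split T m into P m and Q m
  have hsplit2 : {c : Fin (m+1) → Set α | IsCovChain M F G m c}
      = {c : Fin (m+1) → Set α | IsCovChain M F G m c ∧ i ∈ c (Fin.last m)}
        ∪ {c : Fin (m+1) → Set α | IsCovChain M F G m c ∧ i ∉ c (Fin.last m)} := by
    ext c
    simp only [mem_setOf_eq, mem_union]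
    by_cases hp : i ∈ c (Fin.last m) <;> tauto
  have hdisj2 : Disjoint
      {c : Fin (m+1) → Set α | IsCovChain M F G m c ∧ i ∈ c (Fin.last m)}
      {c : Fin (m+1) → Set α | IsCovChain M F G m c ∧ i ∉ c (Fin.last m)} := by
    rw [Set.disjoint_left]
    rintro c ⟨_, hp⟩ ⟨_, hnp⟩
    exact hnp hp
  rw [hsplit1, Set.ncard_union_eq hdisj1 (Set.toFinite _) (Set.toFinite _),
    hsplit2, Set.ncard_union_eq hdisj2 (Set.toFinite _) (Set.toFinite _),
    R_eq hF hG hi hE m]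
  ring

/-- There is exactly one chain of length 1 whose top contains `i ∈ G \ F`. -/
lemma P_one (hF : M.IsFlat F) (hG : M.IsFlat G) (hFG : F ⊆ G) (hi : i ∈ G) (hiF : i ∉ F)
    (hE : M.E = Set.univ) :
    {c : Fin 2 → Set α | IsCovChain M F G 1 c ∧ i ∈ c (Fin.last 1)}.ncard = 1 := by
  classical
  have hcov : MCov M F (M.closure (insert i F)) :=
    mcov_closure_insert hF (by rw [hE]; trivial) hiF
  have hAG : M.closure (insert i F) ⊆ G := by
    have h2 := M.closure_subset_closure (insert_subset hi hFG)
    rwa [hG.closure] at h2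
  have hset : {c : Fin 2 → Set α | IsCovChain M F G 1 c ∧ i ∈ c (Fin.last 1)}
      = {fun j : Fin 2 => if j = 0 then F else M.closure (insert i F)} := by
    ext c
    simp only [mem_setOf_eq, mem_singleton_iff]
    constructor
    · rintro ⟨⟨hc0, hcstep, hclast⟩, hil⟩
      have hcov1 := hcstep 0
      have h01 : (0 : Fin 1).castSucc = (0 : Fin 2) := rfl
      have h11 : (0 : Fin 1).succ = (1 : Fin 2) := rfl
      rw [h01, h11] at hcov1
      have hlast1 : (Fin.last 1) = (1 : Fin 2) := rfl
      rw [hlast1] at hil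
      have hiF' : i ∉ c 0 := by rw [hc0]; exact hiF
      have e1 : c 1 = M.closure (insert i (c 0)) := hcov1.eq_closure_insert ⟨hil, hiF'⟩
      funext j
      fin_cases j
      · simpa using hc0
      · simp only [show ((⟨1, by omega⟩ : Fin 2)) = (1 : Fin 2) from rfl, if_neg
          (by decide : (1 : Fin 2) ≠ 0)]
        rw [e1, hc0]
    · rintro rfl
      refine ⟨⟨by simp, ?_, ?_⟩, ?_⟩
      · intro j
        have hj : j = 0 := Subsingleton.elim j 0
        subst hj
        simpa using hcov
      · simpa using hAG
      · simp only [Fin.last]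
        have : i ∈ M.closure (insert i F) :=
          M.mem_closure_of_mem (mem_insert i _) (by rw [hE]; exact subset_univ _)
        simpa using this
  rw [hset, Set.ncard_singleton]

end Counting

section MainAux

lemma sum_Icc_telescope (g : ℕ → ℝ) (k : ℕ) (hk2 : 2 ≤ k) :
    ∑ l ∈ Finset.Icc 2 k, (g (l-1) - g l) = g 1 - g k := by
  have h : Finset.Icc 2 k = (Finset.range (k-1)).map ⟨fun j => j + 2, add_left_injective 2⟩ := by
    ext x
    simp only [Finset.mem_map, Finset.mem_Icc, Finset.mem_range, Function.Embedding.coeFn_mk]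
    constructor
    · rintro ⟨h1, h2⟩; exact ⟨x - 2, by omega, by omega⟩
    · rintro ⟨a, ha, rfl⟩; omega
  rw [h, Finset.sum_map]
  have h2 := Finset.sum_range_sub' (fun j => g (j+1)) (k-1)
  simp only [Function.Embedding.coeFn_mk]
  have e1 : ∀ j, g (j + 2 - 1) - g (j + 2) = (fun j => g (j+1)) j - (fun j => g (j+1)) (j+1) := by
    intro j; simp only; congr 2
  rw [Finset.sum_congr rfl (fun j _ => e1 j), h2]
  congr 2
  omega

lemma finsum_eVec_apply {β : Type*} [Finite β] (S : Set β) (f : β → Set α) (i : α) :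
    (∑ᶠ c ∈ S, eVec (f c)) i = (({c | c ∈ S ∧ i ∈ f c}).ncard : ℝ) := by
  classical
  have hS : S.Finite := Set.toFinite S
  rw [finsum_mem_eq_finite_toFinset_sum _ hS, Finset.sum_apply]
  have h1 : ∀ c ∈ hS.toFinset, eVec (f c) i = if i ∈ f c then (1:ℝ) else 0 := by
    intro c _; simp [eVec, Set.indicator_apply]
  rw [Finset.sum_congr rfl h1, Finset.sum_boole]
  congr 1
  have h2 : {c | c ∈ S ∧ i ∈ f c} = ↑(hS.toFinset.filter (fun c => i ∈ f c)) := by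
    ext c; simp [Set.Finite.mem_toFinset]
  rw [h2, Set.ncard_coe_finset]

end MainAux

end Aux

/-- The degenerate rearranged case of higher balancing: for flats `F ⊊ G` with
`k = rk G − rk F ≥ 2`, the vector
`Σ_{l=2}^{k} (−1)^{k−l+1} Σ_{F=F⁽⁰⁾⋖⋯⋖F⁽ˡ⁾⊆G} e_{F⁽ˡ⁻¹⁾}`
lies in the linear span of `{e_F, e_G}`. -/
theorem degenerate_higher_balancing {α : Type*} [Fintype α] (M : Matroid α)
    (hE : M.E = Set.univ) (F G : Set α) (hF : M.IsFlat F) (hG : M.IsFlat G) (hFG : F ⊂ G)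
    (k : ℕ) (hk : k = mrk M G - mrk M F) (hk2 : 2 ≤ k) :
    (∑ l ∈ Finset.Icc 2 k, ((-1 : ℝ) ^ (k - l + 1)) •
        (∑ᶠ c ∈ {c : Fin (l + 1) → Set α | IsCovChain M F G l c},
          eVec (c ⟨l - 1, by omega⟩)))
      ∈ Submodule.span ℝ ({eVec F, eVec G} : Set (α → ℝ)) := by
  classical
  have hGE : G ⊆ M.E := by rw [hE]; exact Set.subset_univ _
  have hFle : mrk M F ≤ mrk M G := mrk_mono hFG.subset hGE
  have hlen : mrk M F + k = mrk M G := by omega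
  set T : ℕ → ℕ := fun l => {c : Fin (l+1) → Set α | IsCovChain M F G l c}.ncard with hT
  set a : ℝ := ∑ l ∈ Finset.Icc 2 k, (-1:ℝ)^(k-l+1) * (T l : ℝ) with ha
  set b : ℝ := (-1:ℝ)^(k-1) - (T k : ℝ)
      - ∑ l ∈ Finset.Icc 2 k, (-1:ℝ)^(k-l+1) * (T (l-1) : ℝ) with hb
  have key : (∑ l ∈ Finset.Icc 2 k, ((-1 : ℝ) ^ (k - l + 1)) •
        (∑ᶠ c ∈ {c : Fin (l + 1) → Set α | IsCovChain M F G l c},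
          eVec (c ⟨l - 1, by omega⟩)))
      = (a - b) • eVec F + b • eVec G := by
    funext i
    have hRHS : ((a - b) • eVec F + b • eVec G) i
        = (a-b) * (if i ∈ F then 1 else 0) + b * (if i ∈ G then 1 else 0) := by
      simp [eVec, Set.indicator_apply]
    rw [Pi.add_apply] at hRHS ⊢
    rw [Finset.sum_apply, hRHS]
    have hstep : ∀ l ∈ Finset.Icc 2 k,
        (((-1 : ℝ) ^ (k - l + 1)) •
          (∑ᶠ c ∈ {c : Fin (l + 1) → Set α | IsCovChain M F G l c},
            eVec (c ⟨l - 1, by omega⟩))) i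
        = (-1:ℝ)^(k-l+1) *
          (({c : Fin (l+1) → Set α | IsCovChain M F G l c ∧
              i ∈ c ⟨l - 1, by omega⟩}).ncard : ℝ) := by
      intro l _
      rw [Pi.smul_apply, smul_eq_mul]
      congr 1
      exact finsum_eVec_apply {c : Fin (l+1) → Set α | IsCovChain M F G l c}
        (fun c => c ⟨l - 1, by omega⟩) i
    rw [Finset.sum_congr rfl hstep]
    by_cases hiG : i ∈ G
    · by_cases hiF : i ∈ F
      · -- `i ∈ F` : every chain member contains `i`
        have hNl : ∀ l ∈ Finset.Icc 2 k,
            ({c : Fin (l+1) → Set α | IsCovChain M F G l c ∧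
                i ∈ c ⟨l - 1, by omega⟩}) = {c : Fin (l+1) → Set α | IsCovChain M F G l c} := by
          intro l _
          ext c
          simp only [Set.mem_setOf_eq, and_iff_left_iff_imp]
          intro hc
          exact chain_F_subset hc _ hiF
        rw [Finset.sum_congr rfl (fun l hl => by rw [hNl l hl])]
        simp only [if_pos hiF, if_pos hiG]
        rw [← ha]
        ring
      · -- `i ∈ G \ F` : the main computation
        set P : ℕ → ℕ := fun l =>
          {c : Fin (l+1) → Set α | IsCovChain M F G l c ∧ i ∈ c (Fin.last l)}.ncard with hPdef
        have hNP : ∀ l ∈ Finset.Icc 2 k,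
            (({c : Fin (l+1) → Set α | IsCovChain M F G l c ∧
                i ∈ c ⟨l - 1, by omega⟩}).ncard : ℝ)
            = (P l : ℝ) + (P (l-1) : ℝ) - (T (l-1) : ℝ) := by
          intro l hl
          simp only [Finset.mem_Icc] at hl
          obtain ⟨m, rfl⟩ : ∃ m, l = m + 1 := ⟨l - 1, by omega⟩
          have hidx : (⟨m + 1 - 1, by omega⟩ : Fin (m+1+1)) = (Fin.last m).castSucc := by
            apply Fin.ext
            simp
          rw [hidx]
          have hcount := N_count hF hG hiG hE m
          have hTm : T (m + 1 - 1) = T m := by rw [Nat.add_sub_cancel]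
          have hPm : P (m + 1 - 1) = P m := by rw [Nat.add_sub_cancel]
          rw [hTm, hPm]
          have hc' : ({c : Fin (m+1+1) → Set α | IsCovChain M F G (m+1) c ∧
              i ∈ c ((Fin.last m).castSucc)}.ncard : ℝ) + (T m : ℝ)
              = (P (m+1) : ℝ) + (P m : ℝ) := by
            rw [hT, hPdef]
            exact_mod_cast congrArg (Nat.cast : ℕ → ℝ) hcount
          linarith
        rw [Finset.sum_congr rfl (fun l hl => by rw [hNP l hl])]
        have hsum1 : ∑ l ∈ Finset.Icc 2 k,
              (-1:ℝ)^(k-l+1) * ((P l:ℝ) + (P (l-1):ℝ) - (T (l-1):ℝ))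
            = (∑ l ∈ Finset.Icc 2 k,
                ((fun l => (-1:ℝ)^(k-l) * (P l:ℝ)) (l-1) - (fun l => (-1:ℝ)^(k-l) * (P l:ℝ)) l))
              - ∑ l ∈ Finset.Icc 2 k, (-1:ℝ)^(k-l+1) * (T (l-1):ℝ) := by
          rw [← Finset.sum_sub_distrib]
          refine Finset.sum_congr rfl fun l hl => ?_
          simp only [Finset.mem_Icc] at hl
          simp only []
          have e1 : k - (l-1) = k - l + 1 := by omega
          rw [e1, pow_succ]
          ring
        rw [hsum1, sum_Icc_telescope (fun l => (-1:ℝ)^(k-l) * (P l:ℝ)) k hk2]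
        have hP1 : P 1 = 1 := P_one hF hG hFG.subset hiG hiF hE
        have hPk : P k = T k := by
          have hset : {c : Fin (k+1) → Set α | IsCovChain M F G k c ∧ i ∈ c (Fin.last k)}
              = {c : Fin (k+1) → Set α | IsCovChain M F G k c} := by
            ext c
            simp only [Set.mem_setOf_eq, and_iff_left_iff_imp]
            intro hc
            rw [chain_top_eq hc hF hGE hlen]
            exact hiG
          simp only [hPdef, hT, hset]
        simp only [hP1, hPk, Nat.sub_self, pow_zero, if_pos hiG, if_neg hiF]
        rw [hb]
        push_cast
        ring
    · -- `i ∉ G` : everything vanishes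
      have hiF : i ∉ F := fun h => hiG (hFG.subset h)
      have hNl : ∀ l ∈ Finset.Icc 2 k,
          ({c : Fin (l+1) → Set α | IsCovChain M F G l c ∧
              i ∈ c ⟨l - 1, by omega⟩}) = (∅ : Set (Fin (l+1) → Set α)) := by
        intro l _
        ext c
        simp only [Set.mem_setOf_eq, Set.mem_empty_iff_false, iff_false, not_and]
        intro hc hmem
        exact hiG (chain_subset_G hc _ hmem)
      rw [Finset.sum_congr rfl (fun l hl => by rw [hNl l hl])]
      simp [if_neg hiF, if_neg hiG]
  rw [key]
  exact Submodule.add_mem _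
    (Submodule.smul_mem _ _ (Submodule.subset_span (Set.mem_insert _ _)))
    (Submodule.smul_mem _ _ (Submodule.subset_span (Set.mem_insert_of_mem _ rfl)))
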